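/- arXiv:1009.1104 — 3 statements merged into one kernel-verified Lean document; each statement's English description precedes it below -/
import Mathlib

section
/- Chord through the focus avoids the body: let α > 0 and 0 < γ < β, and let B₂(α,β,γ) = {(x,y) ∈ ℝ² : |y| ≤ αx² − 1/(4α), γ ≤ |x| ≤ β}. Then for every x₀ ∈ ℝ, setting p = (x₀, αx₀² − 1/(4α)), the open segment {s·p : s ∈ (−1, 1)} is disjoint from B₂(α,β,γ). -/
/-- The planar body `B₂(α,β,γ) = {(x,y) : |y| ≤ αx² − 1/(4α), γ ≤ |x| ≤ β}`. -/
def B2 (α β γ : ℝ) : Set (EuclideanSpace ℝ (Fin 2)) :=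
  {p | |p 1| ≤ α * (p 0) ^ 2 - 1 / (4 * α) ∧ γ ≤ |p 0| ∧ |p 0| ≤ β}

/-- Chord through the focus avoids the body: for `α > 0`, `0 < γ < β`, and any `x₀ ∈ ℝ`,
with `p = (x₀, αx₀² − 1/(4α))`, the open segment `{s • p : s ∈ (−1, 1)}` is disjoint
from `B₂(α,β,γ)`. -/
theorem chord_through_focus_avoids_body (α β γ : ℝ) (hα : 0 < α) (hγ : 0 < γ) (hγβ : γ < β)
    (x₀ : ℝ) :
    ∀ s ∈ Set.Ioo (-1 : ℝ) 1,
      s • (WithLp.toLp 2 ![x₀, α * x₀ ^ 2 - 1 / (4 * α)] : EuclideanSpace ℝ (Fin 2)) ∉ B2 α β γ := by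
  intro s hs h
  obtain ⟨h1, _, _⟩ := h
  simp only [B2, Set.mem_setOf_eq, PiLp.smul_apply, WithLp.ofLp_toLp, Pi.smul_apply, Matrix.cons_val_zero, Matrix.cons_val_one,
    Matrix.head_cons, smul_eq_mul] at h1
  have hc : (0:ℝ) < 1 / (4 * α) := by positivity
  have ha : (0:ℝ) ≤ α * x₀ ^ 2 := by positivity
  have hs1 : |s| < 1 := abs_lt.mpr hs
  rw [abs_mul] at h1
  have hsq : |s| ^ 2 = s ^ 2 := sq_abs s
  rcases abs_cases (α * x₀ ^ 2 - 1 / (4 * α)) with ⟨hv, _⟩ | ⟨hv, _⟩ <;>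
    nlinarith [abs_nonneg s, sq_nonneg s, mul_nonneg (abs_nonneg s) ha]
end

section
/- Zero resistance of the planar body in the direction (0,−1), per-particle form: let α > 0, 0 < γ < β with 2αβ > 1, and let x₀ satisfy max(γ, 1/(2α)) ≤ |x₀| ≤ β. Put y₀ = αx₀² − 1/(4α) ≥ 0 and p = (x₀, y₀). Then: (i) p ∈ B₂(α,β,γ), and no point (x₀, y) with y > y₀ lies in B₂(α,β,γ) (so a particle moving with velocity (0,−1) along the vertical line x = x₀ first hits the body at p); (ii) the billiard reflection of (0,−1) at p with unit normal (−2αx₀, 1)/√(1+4α²x₀²) equals −p/‖p‖; (iii) the open segment {s·p : s ∈ (−1,1)} is disjoint from B₂(α,β,γ), and −p ∈ B₂(α,β,γ); (iv) the billiard reflection of −p/‖p‖ at −p with unit normal (2αx₀, −1)/√(1+4α²x₀²) equals (0,−1); (v) no point (−x₀, y) with y < −y₀ lies in B₂(α,β,γ). Consequently, the particle makes exactly two reflections and its final velocity equals its initial velocity (0,−1), exiting along the vertical line x = −x₀. -/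
open scoped RealInnerProductSpace

set_option maxHeartbeats 1600000 in
/-- Zero resistance of the planar body in the direction `(0,−1)`, per-particle form:
the particle entering along `x = x₀` first hits the body at `p = (x₀, y₀)`, reflects
toward the focus, crosses to `−p`, reflects again, and exits vertically along `x = −x₀`
with the original velocity `(0,−1)`. -/
theorem planar_zero_resistance (α β γ x₀ : ℝ) (hα : 0 < α) (hγ : 0 < γ) (hγβ : γ < β)
    (hβ : 2 * α * β > 1) (hx₀l : max γ (1 / (2 * α)) ≤ |x₀|) (hx₀r : |x₀| ≤ β)
    (y₀ : ℝ) (hy₀ : y₀ = α * x₀ ^ 2 - 1 / (4 * α))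
    (p v n₁ n₂ : EuclideanSpace ℝ (Fin 2))
    (hp : p = !₂[x₀, y₀]) (hv : v = !₂[0, -1])
    (hn₁ : n₁ = (Real.sqrt (1 + 4 * α ^ 2 * x₀ ^ 2))⁻¹ •
      (!₂[-(2 * α * x₀), 1] : EuclideanSpace ℝ (Fin 2)))
    (hn₂ : n₂ = (Real.sqrt (1 + 4 * α ^ 2 * x₀ ^ 2))⁻¹ •
      (!₂[2 * α * x₀, -1] : EuclideanSpace ℝ (Fin 2))) :
    -- (i) `p` is the first hitting point of the downward particle on the line `x = x₀`
    (p ∈ B2 α β γ ∧ ∀ y : ℝ, y > y₀ → (!₂[x₀, y] : EuclideanSpace ℝ (Fin 2)) ∉ B2 α β γ) ∧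
    -- (ii) reflection at `p` sends `(0,−1)` to `−p/‖p‖`
    v - (2 * ⟪v, n₁⟫) • n₁ = -(‖p‖⁻¹ • p) ∧
    -- (iii) the chord through the focus avoids the body, and `−p` belongs to the body
    ((∀ s ∈ Set.Ioo (-1 : ℝ) 1, s • p ∉ B2 α β γ) ∧ -p ∈ B2 α β γ) ∧
    -- (iv) reflection at `−p` sends `−p/‖p‖` back to `(0,−1)`
    (-(‖p‖⁻¹ • p)) - (2 * ⟪-(‖p‖⁻¹ • p), n₂⟫) • n₂ = v ∧
    -- (v) the outgoing vertical ray along `x = −x₀` avoids the body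
    (∀ y : ℝ, y < -y₀ → (!₂[-x₀, y] : EuclideanSpace ℝ (Fin 2)) ∉ B2 α β γ) := by
  have hxγ : γ ≤ |x₀| := le_trans (le_max_left _ _) hx₀l
  have hxa : 1 / (2 * α) ≤ |x₀| := le_trans (le_max_right _ _) hx₀l
  have h2α : (0:ℝ) < 2 * α := by linarith
  have h4α : (0:ℝ) < 4 * α := by linarith
  have h1 : 1 ≤ |x₀| * (2 * α) := (div_le_iff₀ h2α).mp hxa
  have hx2 : 1 ≤ 4 * α ^ 2 * x₀ ^ 2 := by nlinarith [sq_abs x₀]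
  have hy0nn : 0 ≤ y₀ := by
    rw [hy₀, sub_nonneg, div_le_iff₀ h4α]; nlinarith
  have hc : (0:ℝ) < 1 / (4 * α) := by positivity
  have hS : (0:ℝ) < 1 + 4 * α ^ 2 * x₀ ^ 2 := by nlinarith
  set s : ℝ := Real.sqrt (1 + 4 * α ^ 2 * x₀ ^ 2) with hsdef
  have hss : s * s = 1 + 4 * α ^ 2 * x₀ ^ 2 := Real.mul_self_sqrt hS.le
  have hs0 : 0 < s := Real.sqrt_pos.mpr hS
  have hnp : ‖p‖ = α * x₀ ^ 2 + 1 / (4 * α) := by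
    rw [hp, EuclideanSpace.norm_eq]
    simp only [Fin.sum_univ_two, Matrix.cons_val_zero, Matrix.cons_val_one, Matrix.head_cons,
      Real.norm_eq_abs, sq_abs]
    have h : x₀ ^ 2 + y₀ ^ 2 = (α * x₀ ^ 2 + 1 / (4 * α)) ^ 2 := by
      rw [hy₀]; field_simp; ring
    rw [h, Real.sqrt_sq (by positivity)]
  have hnp0 : (0:ℝ) < α * x₀ ^ 2 + 1 / (4 * α) := by positivity
  refine ⟨⟨?_, ?_⟩, ?_, ⟨?_, ?_⟩, ?_, ?_⟩
  · -- p ∈ B2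
    refine ⟨?_, ?_, ?_⟩ <;>
      simp only [hp, Matrix.cons_val_one, Matrix.head_cons, Matrix.cons_val_zero]
    · rw [abs_of_nonneg hy0nn, hy₀]
    · exact hxγ
    · exact hx₀r
  · -- no higher point
    intro y hy hmem
    obtain ⟨h1', -, -⟩ := hmem
    simp only [Matrix.cons_val_one, Matrix.head_cons, Matrix.cons_val_zero] at h1'
    have h2' : y ≤ |y| := le_abs_self y
    rw [← hy₀] at h1'
    linarith
  · -- reflection at p
    have hin : ⟪v, n₁⟫ = -s⁻¹ := by
      rw [hv, hn₁, real_inner_smul_right]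
      simp [PiLp.inner_apply, Fin.sum_univ_two, RCLike.inner_apply]
    rw [hin, hn₁, smul_smul, hnp, hp, hv]
    have hq : 2 * -s⁻¹ * s⁻¹ = -(2 / (1 + 4 * α ^ 2 * x₀ ^ 2)) := by
      rw [← hss]; field_simp
    rw [hq]
    ext i
    fin_cases i <;>
      simp only [PiLp.sub_apply, PiLp.smul_apply, PiLp.neg_apply, smul_eq_mul, PiLp.toLp_apply,
        Matrix.cons_val_zero, Matrix.cons_val_one, Matrix.head_cons, Fin.zero_eta, Fin.mk_one,
        Fin.isValue] <;>
      (try rw [hy₀]) <;> field_simp <;> ring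
  · -- chord avoids body
    intro t ht hmem
    obtain ⟨h1', -, -⟩ := hmem
    have hco : (t • p) 0 = t * x₀ := by rw [hp]; simp [PiLp.smul_apply]
    have hc1 : (t • p) 1 = t * y₀ := by rw [hp]; simp [PiLp.smul_apply]
    rw [hco, hc1, abs_mul, abs_of_nonneg hy0nn] at h1'
    have habs : |t| < 1 := abs_lt.mpr ⟨ht.1, ht.2⟩
    have k1 : 0 < (1 - |t|) * (α * x₀ ^ 2 * |t| + 1 / (4 * α)) := by
      apply mul_pos (by linarith)
      have : 0 ≤ α * x₀ ^ 2 * |t| := by positivity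
      linarith
    rw [hy₀] at h1'
    nlinarith [sq_abs t, h1', k1]
  · -- -p ∈ B2
    refine ⟨?_, ?_, ?_⟩ <;>
      simp only [hp, PiLp.neg_apply, Matrix.cons_val_one, Matrix.head_cons,
        Matrix.cons_val_zero, abs_neg, neg_sq]
    · rw [abs_of_nonneg hy0nn, hy₀]
    · exact hxγ
    · exact hx₀r
  · -- reflection at -p
    have hin : ⟪-(‖p‖⁻¹ • p), n₂⟫ = -s⁻¹ := by
      rw [inner_neg_left, real_inner_smul_left, hnp, hn₂, real_inner_smul_right, hp]
      simp only [PiLp.inner_apply, RCLike.inner_apply, conj_trivial, Fin.sum_univ_two,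
        Matrix.cons_val_zero, Matrix.cons_val_one, Matrix.head_cons]
      rw [hy₀]
      field_simp
      nlinarith [hss, hs0]
    rw [hin, hn₂, smul_smul, hnp, hp, hv]
    have hq : 2 * -s⁻¹ * s⁻¹ = -(2 / (1 + 4 * α ^ 2 * x₀ ^ 2)) := by
      rw [← hss]; field_simp
    rw [hq]
    ext i
    fin_cases i <;>
      simp only [PiLp.sub_apply, PiLp.smul_apply, PiLp.neg_apply, smul_eq_mul, PiLp.toLp_apply,
        Matrix.cons_val_zero, Matrix.cons_val_one, Matrix.head_cons, Fin.zero_eta, Fin.mk_one,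
        Fin.isValue] <;>
      (try rw [hy₀]) <;> field_simp <;> ring
  · -- outgoing ray avoids body
    intro y hy hmem
    obtain ⟨h1', -, -⟩ := hmem
    simp only [Matrix.cons_val_one, Matrix.head_cons, Matrix.cons_val_zero, neg_sq] at h1'
    have h2' : -y ≤ |y| := neg_le_abs y
    rw [← hy₀] at h1'
    linarith
end

section
/- Invisibility of the two-copy planar body in the direction (0,−1), per-particle form: let α > 0, 0 < γ < β with 2αβ > 1, set h = 2(αβ² − 1/(4α)), and let D = B₂(α,β,γ) ∪ (B₂(α,β,γ) − (0,h)) be the union of the body with its translate by (0,−h). Let x₀ satisfy max(γ, 1/(2α)) ≤ |x₀| < β, put y₀ = αx₀² − 1/(4α), p = (x₀, y₀), q₁ = (−x₀, y₀ − h), q₂ = (x₀, −y₀ − h). Then: (i) no point (x₀, y) with y > y₀ lies in D, and p ∈ D; (ii) the billiard reflection of (0,−1) at p with unit normal (−2αx₀,1)/√(1+4α²x₀²) equals −p/‖p‖; (iii) the open segment {s·p : s ∈ (−1,1)} is disjoint from D, and −p ∈ D; (iv) the billiard reflection of −p/‖p‖ at −p with unit normal (2αx₀,−1)/√(1+4α²x₀²)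 equals (0,−1); (v) the open vertical segment {(−x₀, y) : y₀ − h < y < −y₀} is disjoint from D, and q₁ ∈ D; (vi) the billiard reflection of (0,−1) at q₁ with unit normal (2αx₀,1)/√(1+4α²x₀²) equals (x₀, −y₀)/‖p‖; (vii) the open segment from q₁ to q₂ (which passes through the shifted focus (0,−h)) is disjoint from D, and q₂ ∈ D; (viii) the billiard reflection of (x₀,−y₀)/‖p‖ at q₂ with unit normal (−2αx₀,−1)/√(1+4α²x₀²) equals (0,−1); (ix) no point (x₀, y) with y < −y₀ − h lies in D. Consequently, the particle enters along the vertical line x = x₀ with velocity (0,−1), makes exactly four reflections, and exits along the same vertical line x = x₀ with velocity (0,−1); i.e., D is invisible to this particle. -/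
open scoped RealInnerProductSpace

lemma refl_helper (N t : ℝ) (hN : 0 < N) (v w r : EuclideanSpace ℝ (Fin 2))
    (ht : ⟪v, w⟫ = t)
    (hr : v - (2 * N⁻¹ * t) • w = r) :
    v - (2 * ⟪v, (Real.sqrt N)⁻¹ • w⟫) • ((Real.sqrt N)⁻¹ • w) = r := by
  rw [real_inner_smul_right, ht, smul_smul, ← hr]
  congr 2
  have h2 : (Real.sqrt N)⁻¹ * (Real.sqrt N)⁻¹ = N⁻¹ := by
    rw [← mul_inv, Real.mul_self_sqrt hN.le]
  linear_combination (2*t) * h2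

lemma memB2_iff (α β γ x y : ℝ) (q : EuclideanSpace ℝ (Fin 2)) (hq : q = !₂[x, y]) :
    q ∈ B2 α β γ ↔ (|y| ≤ α * x ^ 2 - 1 / (4 * α) ∧ γ ≤ |x| ∧ |x| ≤ β) := by
  subst hq
  simp [B2]

lemma memShift_iff (S : Set (EuclideanSpace ℝ (Fin 2))) (e q : EuclideanSpace ℝ (Fin 2)) :
    q ∈ (fun r => r - e) '' S ↔ q + e ∈ S := by
  constructor
  · rintro ⟨w, hw, rfl⟩; simpa using hw
  · intro hq; exact ⟨q + e, hq, add_sub_cancel_right q e⟩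

set_option maxHeartbeats 4000000 in
/-- Invisibility of the two-copy planar body in the direction `(0,−1)`, per-particle
form: the particle enters along the vertical line `x = x₀`, makes exactly four
reflections (at `p`, `−p`, `q₁`, `q₂`), and exits along the same vertical line with
the same velocity `(0,−1)`. -/
theorem planar_invisibility_two_copies (α β γ x₀ : ℝ) (hα : 0 < α) (hγ : 0 < γ)
    (hγβ : γ < β) (hβ : 2 * α * β > 1)
    (hx₀l : max γ (1 / (2 * α)) ≤ |x₀|) (hx₀r : |x₀| < β)
    (h y₀ : ℝ) (hh : h = 2 * (α * β ^ 2 - 1 / (4 * α)))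
    (hy₀ : y₀ = α * x₀ ^ 2 - 1 / (4 * α))
    (e₂ : EuclideanSpace ℝ (Fin 2)) (he₂ : e₂ = !₂[0, h])
    (D : Set (EuclideanSpace ℝ (Fin 2)))
    (hD : D = B2 α β γ ∪ ((fun q => q - e₂) '' B2 α β γ))
    (p q₁ q₂ v u n₁ n₂ n₃ n₄ : EuclideanSpace ℝ (Fin 2))
    (hp : p = !₂[x₀, y₀]) (hv : v = !₂[0, -1])
    (hu : u = ‖p‖⁻¹ • (!₂[x₀, -y₀] : EuclideanSpace ℝ (Fin 2))) (hq₁ : q₁ = !₂[-x₀, y₀ - h]) (hq₂ : q₂ = !₂[x₀, -y₀ - h])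
    (hn₁ : n₁ = (Real.sqrt (1 + 4 * α ^ 2 * x₀ ^ 2))⁻¹ •
      (!₂[-(2 * α * x₀), 1] : EuclideanSpace ℝ (Fin 2)))
    (hn₂ : n₂ = (Real.sqrt (1 + 4 * α ^ 2 * x₀ ^ 2))⁻¹ •
      (!₂[2 * α * x₀, -1] : EuclideanSpace ℝ (Fin 2)))
    (hn₃ : n₃ = (Real.sqrt (1 + 4 * α ^ 2 * x₀ ^ 2))⁻¹ •
      (!₂[2 * α * x₀, 1] : EuclideanSpace ℝ (Fin 2)))
    (hn₄ : n₄ = (Real.sqrt (1 + 4 * α ^ 2 * x₀ ^ 2))⁻¹ •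
      (!₂[-(2 * α * x₀), -1] : EuclideanSpace ℝ (Fin 2))) :
    -- (i) incoming vertical ray misses `D`; first hit is at `p`
    ((∀ y : ℝ, y > y₀ → (!₂[x₀, y] : EuclideanSpace ℝ (Fin 2)) ∉ D) ∧ p ∈ D) ∧
    -- (ii) reflection at `p` sends `(0,−1)` to `−p/‖p‖`
    v - (2 * ⟪v, n₁⟫) • n₁ = -(‖p‖⁻¹ • p) ∧
    -- (iii) the chord through the focus misses `D`; `−p ∈ D`
    ((∀ s ∈ Set.Ioo (-1 : ℝ) 1, s • p ∉ D) ∧ -p ∈ D) ∧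
    -- (iv) reflection at `−p` sends `−p/‖p‖` to `(0,−1)`
    (-(‖p‖⁻¹ • p)) - (2 * ⟪-(‖p‖⁻¹ • p), n₂⟫) • n₂ = v ∧
    -- (v) the open vertical segment from `−p` down to `q₁` misses `D`; `q₁ ∈ D`
    ((∀ y : ℝ, y₀ - h < y → y < -y₀ → (!₂[-x₀, y] : EuclideanSpace ℝ (Fin 2)) ∉ D) ∧
      q₁ ∈ D) ∧
    -- (vi) reflection at `q₁` sends `(0,−1)` to `(x₀, −y₀)/‖p‖`
    v - (2 * ⟪v, n₃⟫) • n₃ = u ∧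
    -- (vii) the open segment from `q₁` to `q₂` misses `D`; `q₂ ∈ D`
    ((∀ q ∈ openSegment ℝ q₁ q₂, q ∉ D) ∧ q₂ ∈ D) ∧
    -- (viii) reflection at `q₂` sends `(x₀,−y₀)/‖p‖` to `(0,−1)`
    u - (2 * ⟪u, n₄⟫) • n₄ = v ∧
    -- (ix) the outgoing vertical ray along `x = x₀` misses `D`
    (∀ y : ℝ, y < -y₀ - h → (!₂[x₀, y] : EuclideanSpace ℝ (Fin 2)) ∉ D) := by
  -- basic numeric facts
  have hγx : γ ≤ |x₀| := le_trans (le_max_left _ _) hx₀l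
  have hx0 : 1 / (2 * α) ≤ |x₀| := le_trans (le_max_right _ _) hx₀l
  have hβ0 : 0 < β := lt_trans hγ hγβ
  have h2a : 1 ≤ 2 * α * |x₀| := by
    rw [div_le_iff₀ (by positivity)] at hx0; linarith
  have hxx : 1 ≤ 4 * α ^ 2 * x₀ ^ 2 := by
    nlinarith [sq_abs x₀, abs_nonneg x₀]
  have hy₀nn : 0 ≤ y₀ := by
    rw [hy₀, sub_nonneg, div_le_iff₀ (by positivity)]; nlinarith
  have hx₀β : x₀ ^ 2 < β ^ 2 := by
    nlinarith [sq_abs x₀, abs_nonneg x₀]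
  have hhy : 2 * y₀ < h := by rw [hh, hy₀]; nlinarith
  have hh0 : 0 < h := by linarith
  have hN : (0:ℝ) < 1 + 4 * α ^ 2 * x₀ ^ 2 := by positivity
  have hm : (0:ℝ) < α * x₀ ^ 2 + 1 / (4 * α) := by positivity
  have hnp : ‖p‖ = α * x₀ ^ 2 + 1 / (4 * α) := by
    rw [hp, EuclideanSpace.norm_eq]
    simp only [Fin.sum_univ_two, Real.norm_eq_abs, sq_abs, Matrix.cons_val_zero,
      Matrix.cons_val_one, Matrix.head_cons, PiLp.toLp_apply]
    rw [show x₀^2 + y₀^2 = (α*x₀^2 + 1/(4*α))^2 by rw [hy₀]; field_simp; ring]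
    exact Real.sqrt_sq (by positivity)
  -- membership characterization
  have hmemD : ∀ (x y : ℝ) (q : EuclideanSpace ℝ (Fin 2)), q = !₂[x, y] →
      (q ∈ D ↔ ((|y| ≤ α * x ^ 2 - 1 / (4 * α) ∧ γ ≤ |x| ∧ |x| ≤ β) ∨
        (|y + h| ≤ α * x ^ 2 - 1 / (4 * α) ∧ γ ≤ |x| ∧ |x| ≤ β))) := by
    intro x y q hq
    have hadd : q + e₂ = (!₂[x, y + h] : EuclideanSpace ℝ (Fin 2)) := by
      rw [hq, he₂]; ext i; fin_cases i <;> simp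
    rw [hD, Set.mem_union, memB2_iff α β γ x y q hq, memShift_iff,
      memB2_iff α β γ x (y + h) _ hadd]
  -- the key strict inequality for the focal chords: for |s| < 1,
  -- α (s x₀)² − 1/(4α) < |s| y₀
  have hfocal : ∀ s : ℝ, |s| < 1 → α * (s * x₀) ^ 2 - 1 / (4 * α) < |s| * y₀ := by
    intro s hs
    have h2 : 0 ≤ |s| := abs_nonneg s
    have h3 : s ^ 2 = |s| ^ 2 := (sq_abs s).symm
    have h4 : (0:ℝ) < (1 - |s|) * (α * x₀ ^ 2 * |s| + 1 / (4 * α)) := by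
      apply mul_pos (by linarith) (by positivity)
    rw [hy₀]
    nlinarith [h4]
  -- s² x₀² ≤ x₀² for |s| ≤ 1, hence α(s x₀)² − 1/(4α) ≤ y₀
  have hbnd : ∀ s : ℝ, |s| < 1 → α * (s * x₀) ^ 2 - 1 / (4 * α) ≤ y₀ := by
    intro s hs
    have h2 : 0 ≤ |s| := abs_nonneg s
    have h3 : s ^ 2 = |s| ^ 2 := (sq_abs s).symm
    have hs2 : s ^ 2 ≤ 1 := by nlinarith
    rw [hy₀]
    nlinarith [mul_nonneg (mul_nonneg hα.le (sq_nonneg x₀))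
      (by linarith : (0:ℝ) ≤ 1 - s ^ 2)]
  have hsy : ∀ s : ℝ, |s| < 1 → -y₀ ≤ s * y₀ ∧ s * y₀ ≤ y₀ := by
    intro s hs
    have hb : |s * y₀| ≤ y₀ := by
      rw [abs_mul, abs_of_nonneg hy₀nn]
      exact mul_le_of_le_one_left hy₀nn hs.le
    exact ⟨by linarith [neg_abs_le (s * y₀)], by linarith [le_abs_self (s * y₀)]⟩
  refine ⟨⟨?_, ?_⟩, ?_, ⟨?_, ?_⟩, ?_, ⟨?_, ?_⟩, ?_, ⟨?_, ?_⟩, ?_, ?_⟩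
  -- (i) ray above p
  · intro y hy hmem
    rw [hmemD x₀ y _ rfl] at hmem
    rcases hmem with ⟨h1, _⟩ | ⟨h1, _⟩
    · have := le_abs_self y; rw [hy₀] at hy; linarith
    · have := le_abs_self (y + h); rw [hy₀] at hy; linarith
  -- p ∈ D
  · rw [hmemD x₀ y₀ p hp]
    exact Or.inl ⟨by rw [abs_of_nonneg hy₀nn, hy₀], hγx, hx₀r.le⟩
  -- (ii)
  · subst hy₀
    rw [hnp, hn₁, hv, hp]
    refine refl_helper _ (-1) hN _ _ _ ?_ ?_
    · simp [PiLp.inner_apply, Fin.sum_univ_two]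
    · ext i
      fin_cases i <;> simp <;> field_simp <;> ring
  -- (iii) chord misses D
  · intro s hs hmem
    have habs : |s| < 1 := abs_lt.2 ⟨hs.1, hs.2⟩
    have hsp : s • p = (!₂[s * x₀, s * y₀] : EuclideanSpace ℝ (Fin 2)) := by
      rw [hp]; ext i; fin_cases i <;> simp
    rw [hmemD (s * x₀) (s * y₀) _ hsp] at hmem
    rcases hmem with ⟨h1, _⟩ | ⟨h1, _⟩
    · have h2 := hfocal s habs
      have h3 : |s * y₀| = |s| * y₀ := by rw [abs_mul, abs_of_nonneg hy₀nn]
      linarith [h3 ▸ h1]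
    · have h2 := hbnd s habs
      have h3 := (hsy s habs).1
      have h4 := le_abs_self (s * y₀ + h)
      linarith
  -- -p ∈ D
  · have hnegp : -p = (!₂[-x₀, -y₀] : EuclideanSpace ℝ (Fin 2)) := by
      rw [hp]; ext i; fin_cases i <;> simp
    rw [hmemD (-x₀) (-y₀) _ hnegp]
    exact Or.inl ⟨by rw [abs_neg, abs_of_nonneg hy₀nn, hy₀]; exact le_of_eq (by ring),
      by rw [abs_neg]; exact hγx, by rw [abs_neg]; exact hx₀r.le⟩
  -- (iv)
  · subst hy₀
    rw [hnp, hn₂, hv, hp]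
    refine refl_helper _ (-1) hN _ _ _ ?_ ?_
    · simp [PiLp.inner_apply, Fin.sum_univ_two]
      field_simp
      ring
    · ext i
      fin_cases i <;> simp <;> field_simp <;> ring
  -- (v) vertical segment to q₁
  · intro y hy1 hy2 hmem
    rw [hmemD (-x₀) y _ rfl] at hmem
    rcases hmem with ⟨h1, _⟩ | ⟨h1, _⟩
    · have h2 : α * (-x₀) ^ 2 - 1 / (4*α) = y₀ := by rw [hy₀]; ring
      have := neg_abs_le y; linarith
    · have h2 : α * (-x₀) ^ 2 - 1 / (4*α) = y₀ := by rw [hy₀]; ring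
      have := le_abs_self (y + h); linarith
  -- q₁ ∈ D
  · rw [hmemD (-x₀) (y₀ - h) q₁ hq₁]
    refine Or.inr ⟨?_, by rw [abs_neg]; exact hγx, by rw [abs_neg]; exact hx₀r.le⟩
    rw [show y₀ - h + h = y₀ by ring, abs_of_nonneg hy₀nn, hy₀]
    exact le_of_eq (by ring)
  -- (vi)
  · subst hy₀
    rw [hn₃, hv, hu, hnp]
    refine refl_helper _ (-1) hN _ _ _ ?_ ?_
    · simp [PiLp.inner_apply, Fin.sum_univ_two]
    · ext i
      fin_cases i <;> simp <;> field_simp <;> ring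
  -- (vii) segment q₁ q₂ misses D
  · intro q hq hmem
    obtain ⟨a, b, ha, hb, hab, rfl⟩ := hq
    have hseg : a • q₁ + b • q₂ =
        (!₂[(b - a) * x₀, -((b - a) * y₀) - h] : EuclideanSpace ℝ (Fin 2)) := by
      rw [hq₁, hq₂]; ext i; fin_cases i
      · simp; ring
      · simp; linear_combination (-h) * hab
    set s := b - a with hsdef
    have habs : |s| < 1 := abs_lt.2 ⟨by linarith, by linarith⟩
    rw [hmemD (s * x₀) (-(s * y₀) - h) _ hseg] at hmem
    rcases hmem with ⟨h1, _⟩ | ⟨h1, _⟩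
    · have h2 := hbnd s habs
      have h3 := (hsy s habs).1
      have h5 := neg_abs_le (-(s * y₀) - h)
      linarith
    · have h2 := hfocal (-s) (by rwa [abs_neg])
      have h3 : |-(s * y₀) - h + h| = |-s| * y₀ := by
        rw [show -(s * y₀) - h + h = -s * y₀ by ring, abs_mul, abs_of_nonneg hy₀nn]
      have h4 : α * (-s * x₀) ^ 2 - 1 / (4 * α) = α * (s * x₀) ^ 2 - 1 / (4 * α) := by
        ring
      rw [h3] at h1
      rw [h4] at h2
      linarith
  -- q₂ ∈ D
  · rw [hmemD x₀ (-y₀ - h) q₂ hq₂]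
    refine Or.inr ⟨?_, hγx, hx₀r.le⟩
    rw [show -y₀ - h + h = -y₀ by ring, abs_neg, abs_of_nonneg hy₀nn, hy₀]
  -- (viii)
  · subst hy₀
    rw [hu, hnp, hn₄, hv]
    refine refl_helper _ (-1) hN _ _ _ ?_ ?_
    · simp [PiLp.inner_apply, Fin.sum_univ_two]
      field_simp
      ring
    · ext i
      fin_cases i <;> simp <;> field_simp <;> ring
  -- (ix)
  · intro y hy hmem
    rw [hmemD x₀ y _ rfl] at hmem
    rcases hmem with ⟨h1, _⟩ | ⟨h1, _⟩
    · have := neg_abs_le y; rw [hy₀] at hy; linarith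
    · have := neg_abs_le (y + h); rw [hy₀] at hy; linarith
end
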